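/- Let {φ_r} be a regular approximation of identity on 𝕋 consisting of even functions (each φ_r ≥ 0, even, decreasing on [0,π], ∫_𝕋 φ_r → 1), and λ(r) → 0 as r → 1. Define γ_λ = lim_{τ→1} ( limsup_{δ→0} sup_{τ<r<1} ∫_{-δλ(r)}^{δλ(r)} φ_r(t) dt ). If γ_λ = 0, then for every f ∈ L^∞(𝕋) and every Lebesgue point x of f, lim_{r→1} sup_{|θ-x|≤λ(r)} |∫_𝕋 φ_r(θ-t) f(t) dt - f(x)| = 0. -/

import Mathlib

open MeasureTheory Real Set Filter Topology

/-- A measurable a.e.-bounded function is interval integrable on any interval. -/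
lemma aux_II {u : ℝ → ℝ} (hu : Measurable u) {K : ℝ} (hK : ∀ᵐ t, |u t| ≤ K) (a b : ℝ) :
    IntervalIntegrable u volume a b := by
  refine IntervalIntegrable.mono_fun' (g := fun _ => K) intervalIntegrable_const
    hu.aestronglyMeasurable.restrict ?_
  refine ae_restrict_of_ae (hK.mono fun t ht => ?_)
  simpa [Real.norm_eq_abs] using ht

set_option maxHeartbeats 4000000 in
/-- Theorem 5: for a regular approximation of identity of even kernels
with `γ_λ = 0`, the convolutions `Φ_r(θ, f)` of a bounded function `f`
`λ(r)`-converge to `f(x)` at every Lebesgue point `x`. -/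
theorem fatou_bounded_functions_gamma_zero
    (φ : ℝ → ℝ → ℝ) (lam : ℝ → ℝ)
    (hmeas : ∀ r ∈ Set.Ioo (0 : ℝ) 1, Measurable (φ r))
    (hper : ∀ r ∈ Set.Ioo (0 : ℝ) 1, ∀ t, φ r (t + 2 * π) = φ r t)
    (hbdd : ∀ r ∈ Set.Ioo (0 : ℝ) 1, ∃ M, ∀ t, |φ r t| ≤ M)
    (hnonneg : ∀ r ∈ Set.Ioo (0 : ℝ) 1, ∀ t, 0 ≤ φ r t)
    (heven : ∀ r ∈ Set.Ioo (0 : ℝ) 1, ∀ t, φ r (-t) = φ r t)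
    (hdec : ∀ r ∈ Set.Ioo (0 : ℝ) 1, AntitoneOn (φ r) (Set.Icc 0 π))
    (hAI1 : Tendsto (fun r => ∫ t in (-π)..π, φ r t) (𝓝[<] (1 : ℝ)) (𝓝 1))
    (hAI2 : ∀ x ∈ Set.Ioo (0 : ℝ) π,
      Tendsto (fun r => sSup {s : ℝ | ∃ t, x ≤ |t| ∧ |t| ≤ π ∧ s = |φ r t|})
        (𝓝[<] (1 : ℝ)) (𝓝 0))
    (hlampos : ∀ r ∈ Set.Ioo (0 : ℝ) 1, 0 < lam r)
    (hlam0 : Tendsto lam (𝓝[<] (1 : ℝ)) (𝓝 0))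
    -- `γ_λ = 0`, unfolded: the inner `limsup_δ sup_r` can be made `< ε` for `τ` near 1.
    (hgamma : ∀ ε > 0, ∃ τ ∈ Set.Ioo (0 : ℝ) 1, ∃ δ₀ > 0, ∀ δ ∈ Set.Ioo 0 δ₀,
      ∀ r ∈ Set.Ioo τ 1, (∫ t in (-(δ * lam r))..(δ * lam r), φ r t) < ε)
    (f : ℝ → ℝ) (hfmeas : Measurable f)
    (hfbdd : ∃ C, ∀ᵐ t, |f t| ≤ C)
    (hfper : ∀ t, f (t + 2 * π) = f t)
    (x : ℝ)
    (hLeb : Tendsto (fun h : ℝ => (1 / (2 * h)) * ∫ t in (-h)..h, |f (x + t) - f x|)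
      (𝓝[>] (0 : ℝ)) (𝓝 0)) :
    ∀ ε > 0, ∀ᶠ r in 𝓝[<] (1 : ℝ), ∀ θ, |θ - x| ≤ lam r →
      |(∫ t in (-π)..π, φ r (θ - t) * f t) - f x| < ε := by
  intro ε hε
  obtain ⟨C₀, hC₀⟩ := hfbdd
  set C : ℝ := |C₀| + |f x| + 1 with hCdef
  have hCpos : 0 < C := by positivity
  have hqC : ∀ᵐ u, |f u - f x| ≤ C := by
    filter_upwards [hC₀] with u hu
    have h1 : |f u - f x| ≤ |f u| + |f x| := abs_sub _ _
    have h2 : |f u| ≤ |C₀| := hu.trans (le_abs_self C₀)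
    simp only [hCdef]; linarith
  have hqmeas : Measurable fun u => |f u - f x| := (hfmeas.sub measurable_const).abs
  have hqint : ∀ u v : ℝ, IntervalIntegrable (fun w => |f w - f x|) volume u v :=
    fun u v => aux_II hqmeas (hqC.mono fun t ht => by simpa [abs_abs] using ht) u v
  -- γ_λ data
  have hε1pos : 0 < ε / (4 * C) := by positivity
  obtain ⟨τ₁, hτ₁, δ₀, hδ₀pos, hga⟩ := hgamma (ε / (4 * C)) hε1pos
  set δ : ℝ := δ₀ / 2 with hδdef
  have hδpos : 0 < δ := by positivity
  have hδmem : δ ∈ Set.Ioo 0 δ₀ := ⟨hδpos, by rw [hδdef]; linarith⟩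
  have h1δpos : 0 < 1 + 1 / δ := by positivity
  set ε' : ℝ := ε / (32 * (1 + 1 / δ)) with hε'def
  have hε'pos : 0 < ε' := by positivity
  -- Lebesgue point : choose h₀
  have hev : ∀ᶠ h in 𝓝[>] (0 : ℝ),
      (1 / (2 * h)) * ∫ t in (-h)..h, |f (x + t) - f x| < ε' / 2 :=
    hLeb.eventually (gt_mem_nhds (by positivity))
  obtain ⟨h₀, hh₀, hsubset⟩ := mem_nhdsGT_iff_exists_Ioo_subset.mp hev
  have hh₀pos : 0 < h₀ := hh₀
  have hG : ∀ h : ℝ, 0 < h → h < h₀ → (∫ t in (-h)..h, |f (x + t) - f x|) ≤ ε' * h := by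
    intro h hp hlt
    have h2 : (1 / (2 * h)) * ∫ t in (-h)..h, |f (x + t) - f x| < ε' / 2 :=
      hsubset ⟨hp, hlt⟩
    have h2h : (0 : ℝ) < 2 * h := by linarith
    calc (∫ t in (-h)..h, |f (x + t) - f x|)
        = (2 * h) * ((1 / (2 * h)) * ∫ t in (-h)..h, |f (x + t) - f x|) := by
          field_simp
      _ ≤ (2 * h) * (ε' / 2) := by nlinarith
      _ = ε' * h := by ring
  have hπ : 0 < π := Real.pi_pos
  have hπ4 : π ≤ 4 := Real.pi_le_four
  set η : ℝ := min (π / 2) (h₀ / (8 * (1 + 1 / δ))) with hηdef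
  have hηpos : 0 < η := lt_min (by positivity) (by positivity)
  have hηπ2 : η ≤ π / 2 := min_le_left _ _
  have hηπ : η < π := lt_of_le_of_lt hηπ2 (by linarith)
  have hηh₀ : 2 * η * (1 + 1 / δ) < h₀ := by
    have h1 : η ≤ h₀ / (8 * (1 + 1 / δ)) := min_le_right _ _
    have h2 : η * (8 * (1 + 1 / δ)) ≤ h₀ := by
      rw [← le_div_iff₀ (by positivity)]; exact h1
    nlinarith
  set ε₂ : ℝ := ε / (64 * C) with hε₂def
  have hε₂pos : 0 < ε₂ := by positivity
  set ε'' : ℝ := min 1 (ε / (8 * (|f x| + 1))) with hε''def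
  have hε''pos : 0 < ε'' := lt_min one_pos (by positivity)
  -- eventual facts
  have hE1 : ∀ᶠ r in 𝓝[<] (1 : ℝ), r ∈ Set.Ioo τ₁ 1 :=
    Ioo_mem_nhdsLT_of_mem ⟨hτ₁.2, le_refl 1⟩
  have hE2 : ∀ᶠ r in 𝓝[<] (1 : ℝ), lam r < η / δ :=
    hlam0.eventually (gt_mem_nhds (by positivity))
  have hE3 : ∀ᶠ r in 𝓝[<] (1 : ℝ), |(∫ t in (-π)..π, φ r t) - 1| < ε'' := by
    have := Metric.tendsto_nhds.mp hAI1 ε'' hε''pos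
    exact this.mono fun r h => by rwa [Real.dist_eq] at h
  have hE4 : ∀ᶠ r in 𝓝[<] (1 : ℝ),
      sSup {s : ℝ | ∃ t, η ≤ |t| ∧ |t| ≤ π ∧ s = |φ r t|} < ε₂ :=
    (hAI2 η ⟨hηpos, hηπ⟩).eventually (gt_mem_nhds hε₂pos)
  filter_upwards [hE1, hE2, hE3, hE4] with r hr1 hr2 hr3 hr4
  intro θ hθ
  have hr01 : r ∈ Set.Ioo (0 : ℝ) 1 := ⟨hτ₁.1.trans hr1.1, hr1.2⟩
  obtain ⟨M, hM⟩ := hbdd r hr01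
  have hψm : Measurable (φ r) := hmeas r hr01
  have hψnn : ∀ t, 0 ≤ φ r t := hnonneg r hr01
  have hψint : ∀ u v : ℝ, IntervalIntegrable (φ r) volume u v :=
    fun u v => aux_II hψm (Eventually.of_forall hM) u v
  have hLpos : 0 < lam r := hlampos r hr01
  set a : ℝ := δ * lam r with hadef
  have hapos : 0 < a := mul_pos hδpos hLpos
  have haη : a < η := by
    have h1 := mul_lt_mul_of_pos_left hr2 hδpos
    rw [mul_div_cancel₀ η (ne_of_gt hδpos)] at h1
    rw [hadef]; exact h1
  -- dyadic scale count
  have hex : ∃ n : ℕ, η ≤ 2 ^ n * a := by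
    obtain ⟨n, hn⟩ := pow_unbounded_of_one_lt (η / a) (one_lt_two (α := ℝ))
    exact ⟨n, ((div_lt_iff₀ hapos).mp hn).le⟩
  set N := Nat.find hex with hNdef
  have hN : η ≤ 2 ^ N * a := Nat.find_spec hex
  have hN0 : N ≠ 0 := by
    intro h
    rw [h] at hN
    simp only [pow_zero, one_mul] at hN
    linarith
  obtain ⟨Np, hNp⟩ : ∃ m, N = m + 1 := ⟨N - 1, (Nat.succ_pred_eq_of_ne_zero hN0).symm⟩
  have hNmin : 2 ^ Np * a < η := by
    have h1 := Nat.find_min hex (show Np < N by omega)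
    push_neg at h1
    exact h1
  set b : ℝ := 2 ^ N * a with hbdef
  have hbpos : 0 < b := by positivity
  have hb2η : b < 2 * η := by
    have h1 : b = 2 * (2 ^ Np * a) := by rw [hbdef, hNp, pow_succ]; ring
    linarith
  have hbπ : b ≤ π := by linarith
  have hηb : η ≤ b := hN
  have hab : a ≤ b := by
    have h1 : (1 : ℝ) ≤ 2 ^ N := one_le_pow₀ (by norm_num)
    have h2 : 1 * a ≤ 2 ^ N * a := mul_le_mul_of_nonneg_right h1 hapos.le
    rw [hbdef]; linarith
  -- integrability and a.e. bounds for the shifted functions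
  have hgae : ∀ᵐ s, |f (θ - s) - f x| ≤ C :=
    (Measure.measurePreserving_sub_left volume θ).quasiMeasurePreserving.ae hqC
  have hg2ae : ∀ᵐ s, |f (θ + s) - f x| ≤ C :=
    (measurePreserving_add_left volume θ).quasiMeasurePreserving.ae hqC
  have hfθae : ∀ᵐ s, |f (θ - s)| ≤ C₀ :=
    (Measure.measurePreserving_sub_left volume θ).quasiMeasurePreserving.ae hC₀
  have hgm : Measurable fun s => |f (θ - s) - f x| :=
    ((hfmeas.comp (measurable_const.sub measurable_id)).sub measurable_const).abs
  have hg2m : Measurable fun s => |f (θ + s) - f x| :=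
    ((hfmeas.comp (measurable_const.add measurable_id)).sub measurable_const).abs
  have hgint : ∀ u v : ℝ, IntervalIntegrable (fun s => |f (θ - s) - f x|) volume u v :=
    fun u v => aux_II hgm (hgae.mono fun s hs => by simpa [abs_abs] using hs) u v
  have hg2int : ∀ u v : ℝ, IntervalIntegrable (fun s => |f (θ + s) - f x|) volume u v :=
    fun u v => aux_II hg2m (hg2ae.mono fun s hs => by simpa [abs_abs] using hs) u v
  have hψgm : Measurable fun s => φ r s * |f (θ - s) - f x| := hψm.mul hgm
  have hψg2m : Measurable fun s => φ r s * |f (θ + s) - f x| := hψm.mul hg2m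
  have hψgint : ∀ u v : ℝ,
      IntervalIntegrable (fun s => φ r s * |f (θ - s) - f x|) volume u v := by
    intro u v
    refine aux_II hψgm (K := |M| * C) ?_ u v
    filter_upwards [hgae] with s hs
    rw [abs_mul, abs_abs]
    exact mul_le_mul ((hM s).trans (le_abs_self M)) hs (abs_nonneg _) (abs_nonneg M)
  have hψg2int : ∀ u v : ℝ,
      IntervalIntegrable (fun s => φ r s * |f (θ + s) - f x|) volume u v := by
    intro u v
    refine aux_II hψg2m (K := |M| * C) ?_ u v
    filter_upwards [hg2ae] with s hs
    rw [abs_mul, abs_abs]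
    exact mul_le_mul ((hM s).trans (le_abs_self M)) hs (abs_nonneg _) (abs_nonneg M)
  have hψfint : ∀ u v : ℝ,
      IntervalIntegrable (fun s => φ r s * f (θ - s)) volume u v := by
    intro u v
    refine aux_II (hψm.mul (hfmeas.comp (measurable_const.sub measurable_id)))
      (K := |M| * C₀) ?_ u v
    filter_upwards [hfθae] with s hs
    show |φ r s * f (θ - s)| ≤ |M| * C₀
    rw [abs_mul]
    exact mul_le_mul ((hM s).trans (le_abs_self M)) hs (abs_nonneg _) (abs_nonneg M)
  -- change of variables and periodicity
  have hcv : (∫ t in (-π)..π, φ r (θ - t) * f t) = ∫ s in (-π)..π, φ r s * f (θ - s) := by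
    have hFper : Function.Periodic (fun s => φ r s * f (θ - s)) (2 * π) := by
      intro s
      have hf2 : f (θ - (s + 2 * π)) = f (θ - s) := by
        have h3 := hfper (θ - s - 2 * π)
        rw [show θ - s - 2 * π + 2 * π = θ - s by ring] at h3
        rw [show θ - (s + 2 * π) = θ - s - 2 * π by ring, ← h3]
      simp only [hper r hr01 s, hf2]
    have h2 := hFper.intervalIntegral_add_eq (θ - π) (-π)
    rw [show θ - π + 2 * π = θ - (-π) by ring, show -π + 2 * π = π by ring] at h2
    calc (∫ t in (-π)..π, φ r (θ - t) * f t)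
        = ∫ t in (-π)..π, φ r (θ - t) * f (θ - (θ - t)) := by
          apply intervalIntegral.integral_congr
          intro t _
          simp [sub_sub_cancel]
      _ = ∫ s in θ - π..θ - (-π), φ r s * f (θ - s) :=
          intervalIntegral.integral_comp_sub_left (fun s => φ r s * f (θ - s)) θ
      _ = ∫ s in (-π)..π, φ r s * f (θ - s) := h2
  -- sup bound on the tails
  set S : ℝ := sSup {s : ℝ | ∃ t, η ≤ |t| ∧ |t| ≤ π ∧ s = |φ r t|} with hSdef
  have hSbdd : BddAbove {s : ℝ | ∃ t, η ≤ |t| ∧ |t| ≤ π ∧ s = |φ r t|} := by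
    refine ⟨M, fun y hy => ?_⟩
    obtain ⟨t, _, _, hy⟩ := hy
    rw [hy]; exact hM t
  have hSle : ∀ s : ℝ, η ≤ |s| → |s| ≤ π → φ r s ≤ S := fun s h1 h2 =>
    (le_abs_self _).trans (le_csSup hSbdd ⟨s, h1, h2, rfl⟩)
  have hSnn : 0 ≤ S := by
    refine le_trans (abs_nonneg (φ r π)) (le_csSup hSbdd ⟨π, ?_, ?_, rfl⟩)
    · rw [abs_of_pos hπ]; linarith
    · rw [abs_of_pos hπ]
  -- inner estimate
  have hinner : (∫ s in (-a)..a, φ r s * |f (θ - s) - f x|) < ε / 4 := by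
    have hle : (∫ s in (-a)..a, φ r s * |f (θ - s) - f x|) ≤ C * ∫ s in (-a)..a, φ r s := by
      rw [← intervalIntegral.integral_const_mul]
      refine intervalIntegral.integral_mono_ae (by linarith) (hψgint _ _)
        ((hψint _ _).const_mul C) ?_
      filter_upwards [hgae] with s hs
      calc φ r s * |f (θ - s) - f x| ≤ φ r s * C := mul_le_mul_of_nonneg_left hs (hψnn s)
        _ = C * φ r s := mul_comm _ _
    have hsm : (∫ s in (-a)..a, φ r s) < ε / (4 * C) := by
      have h1 := hga δ hδmem r hr1
      rw [← hadef] at h1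
      exact h1
    have h2 : C * (∫ s in (-a)..a, φ r s) < C * (ε / (4 * C)) :=
      mul_lt_mul_of_pos_left hsm hCpos
    have h3 : C * (ε / (4 * C)) = ε / 4 := by
      field_simp
    rw [h3] at h2
    exact lt_of_le_of_lt hle h2
  -- tail estimates
  have hε₂Cπ : ε₂ * (C * π) ≤ ε / 16 := by
    have h1 : ε₂ * (C * π) = ε * π / 64 := by
      rw [hε₂def]; field_simp
    rw [h1]
    have h2 : ε * π ≤ ε * 4 := mul_le_mul_of_nonneg_left hπ4 hε.le
    linarith
  have htailR : (∫ s in b..π, φ r s * |f (θ - s) - f x|) ≤ ε₂ * (C * π) := by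
    have h1 : (∫ s in b..π, φ r s * |f (θ - s) - f x|)
        ≤ ∫ s in b..π, S * |f (θ - s) - f x| := by
      refine intervalIntegral.integral_mono_on hbπ (hψgint _ _) ((hgint _ _).const_mul S) ?_
      intro s hs
      have hspos : 0 < s := lt_of_lt_of_le hbpos hs.1
      have hs1 : η ≤ |s| := by rw [abs_of_pos hspos]; linarith [hs.1]
      have hs2 : |s| ≤ π := by rw [abs_of_pos hspos]; exact hs.2
      exact mul_le_mul_of_nonneg_right (hSle s hs1 hs2) (abs_nonneg _)
    have h2 : (∫ s in b..π, S * |f (θ - s) - f x|) = S * ∫ s in b..π, |f (θ - s) - f x| :=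
      intervalIntegral.integral_const_mul S _
    have h3 : (∫ s in b..π, |f (θ - s) - f x|) ≤ (π - b) * C := by
      have h4 := intervalIntegral.integral_mono_ae hbπ (hgint b π)
        (intervalIntegrable_const (c := C)) hgae
      rwa [intervalIntegral.integral_const, smul_eq_mul] at h4
    have h5 : S * (∫ s in b..π, |f (θ - s) - f x|) ≤ S * ((π - b) * C) := by
      apply mul_le_mul_of_nonneg_left h3 hSnn
    have h6 : S * ((π - b) * C) ≤ ε₂ * (C * π) := by
      have h7 : 0 ≤ (π - b) * C := mul_nonneg (by linarith) hCpos.le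
      have k1 : S * ((π - b) * C) ≤ ε₂ * ((π - b) * C) :=
        mul_le_mul_of_nonneg_right hr4.le h7
      have k2 : (π - b) * C ≤ C * π := by
        have e1 : (π - b) * C = C * π - b * C := by ring
        have e2 : 0 ≤ b * C := mul_nonneg hbpos.le hCpos.le
        linarith
      have k3 : ε₂ * ((π - b) * C) ≤ ε₂ * (C * π) :=
        mul_le_mul_of_nonneg_left k2 hε₂pos.le
      linarith
    linarith
  have htailL : (∫ s in (-π)..(-b), φ r s * |f (θ - s) - f x|) ≤ ε₂ * (C * π) := by
    have h1 : (∫ s in (-π)..(-b), φ r s * |f (θ - s) - f x|)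
        ≤ ∫ s in (-π)..(-b), S * |f (θ - s) - f x| := by
      refine intervalIntegral.integral_mono_on (by linarith) (hψgint _ _)
        ((hgint _ _).const_mul S) ?_
      intro s hs
      have hsneg : s < 0 := lt_of_le_of_lt hs.2 (by linarith)
      have hs1 : η ≤ |s| := by rw [abs_of_neg hsneg]; linarith [hs.2]
      have hs2 : |s| ≤ π := by rw [abs_of_neg hsneg]; linarith [hs.1]
      exact mul_le_mul_of_nonneg_right (hSle s hs1 hs2) (abs_nonneg _)
    have h2 : (∫ s in (-π)..(-b), S * |f (θ - s) - f x|)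
        = S * ∫ s in (-π)..(-b), |f (θ - s) - f x| :=
      intervalIntegral.integral_const_mul S _
    have h3 : (∫ s in (-π)..(-b), |f (θ - s) - f x|) ≤ (-b - -π) * C := by
      have h4 := intervalIntegral.integral_mono_ae (by linarith : -π ≤ -b) (hgint (-π) (-b))
        (intervalIntegrable_const (c := C)) hgae
      rwa [intervalIntegral.integral_const, smul_eq_mul] at h4
    have h5 : S * (∫ s in (-π)..(-b), |f (θ - s) - f x|) ≤ S * ((-b - -π) * C) :=
      mul_le_mul_of_nonneg_left h3 hSnn
    have h6 : S * ((-b - -π) * C) ≤ ε₂ * (C * π) := by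
      have h7 : 0 ≤ (-b - -π) * C := mul_nonneg (by linarith) hCpos.le
      have k1 : S * ((-b - -π) * C) ≤ ε₂ * ((-b - -π) * C) :=
        mul_le_mul_of_nonneg_right hr4.le h7
      have k2 : (-b - -π) * C ≤ C * π := by
        have e1 : (-b - -π) * C = C * π - b * C := by ring
        have e2 : 0 ≤ b * C := mul_nonneg hbpos.le hCpos.le
        linarith
      have k3 : ε₂ * ((-b - -π) * C) ≤ ε₂ * (C * π) :=
        mul_le_mul_of_nonneg_left k2 hε₂pos.le
      linarith
    linarith
  -- reflect the left middle piece
  have hmidL : (∫ s in (-b)..(-a), φ r s * |f (θ - s) - f x|)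
      = ∫ s in a..b, φ r s * |f (θ + s) - f x| := by
    rw [← intervalIntegral.integral_comp_neg (fun s => φ r s * |f (θ - s) - f x|)
      (a := a) (b := b)]
    apply intervalIntegral.integral_congr
    intro s _
    simp only []
    rw [heven r hr01 s, sub_neg_eq_add]
  -- dyadic estimate for the middle part
  have hmid : (∫ s in (-b)..(-a), φ r s * |f (θ - s) - f x|)
      + (∫ s in a..b, φ r s * |f (θ - s) - f x|) ≤ ε / 4 := by
    set A : ℕ → ℝ := fun k => 2 ^ k * a with hAdef
    have hA0a : A 0 = a := by simp [hAdef]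
    have hANb : A N = b := by rw [hAdef, hbdef]
    have hAmono : Monotone A := fun i j hij => by
      simp only [hAdef]
      exact mul_le_mul_of_nonneg_right (pow_le_pow_right₀ one_le_two hij) hapos.le
    have hApos : ∀ k, 0 < A k := fun k => by simp only [hAdef]; positivity
    have hAtop : ∀ k, k ≤ N → A k ≤ π := fun k hk => by
      have := hAmono hk
      rw [hANb] at this
      linarith
    have key : ∀ k, k < N →
        (∫ s in A k..A (k + 1), (φ r s * |f (θ + s) - f x| + φ r s * |f (θ - s) - f x|))
          ≤ 4 * (ε' * (1 + 1 / δ)) * ∫ s in (2 ^ k * (a / 2))..(2 ^ (k + 1) * (a / 2)), φ r s := by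
      intro k hk
      have hk1N : k + 1 ≤ N := hk
      have hA1π : A (k + 1) ≤ π := hAtop _ hk1N
      have hAkπ : A k ≤ π := hAtop _ (Nat.le_of_lt hk)
      have hAk : 0 < A k := hApos k
      have hAkk : A k ≤ A (k + 1) := hAmono (Nat.le_succ k)
      have hA1 : A (k + 1) = 2 * A k := by simp only [hAdef, pow_succ]; ring
      have haA : a ≤ A (k + 1) := by rw [← hA0a]; exact hAmono (Nat.zero_le _)
      -- pull out the kernel value
      have s1 : (∫ s in A k..A (k + 1), (φ r s * |f (θ + s) - f x| + φ r s * |f (θ - s) - f x|))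
          ≤ ∫ s in A k..A (k + 1), φ r (A k) * (|f (θ + s) - f x| + |f (θ - s) - f x|) := by
        refine intervalIntegral.integral_mono_on hAkk
          ((hψg2int _ _).add (hψgint _ _))
          (((hg2int _ _).add (hgint _ _)).const_mul _) ?_
        intro s hs
        have hφs : φ r s ≤ φ r (A k) :=
          hdec r hr01 ⟨hAk.le, hAkπ⟩ ⟨le_trans hAk.le hs.1, le_trans hs.2 hA1π⟩ hs.1
        have hq1 : 0 ≤ |f (θ + s) - f x| := abs_nonneg _
        have hq2 : 0 ≤ |f (θ - s) - f x| := abs_nonneg _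
        calc φ r s * |f (θ + s) - f x| + φ r s * |f (θ - s) - f x|
            = φ r s * (|f (θ + s) - f x| + |f (θ - s) - f x|) := by ring
          _ ≤ φ r (A k) * (|f (θ + s) - f x| + |f (θ - s) - f x|) :=
              mul_le_mul_of_nonneg_right hφs (add_nonneg hq1 hq2)
      -- Lebesgue point estimate
      have hh'pos : 0 < (1 + 1 / δ) * A (k + 1) := by positivity
      have hh'lt : (1 + 1 / δ) * A (k + 1) < h₀ := by
        have hAb : A (k + 1) ≤ b := by rw [← hANb]; exact hAmono hk1N
        have k1 : (1 + 1 / δ) * A (k + 1) ≤ (1 + 1 / δ) * b :=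
          mul_le_mul_of_nonneg_left hAb h1δpos.le
        have k2 : (1 + 1 / δ) * b < (1 + 1 / δ) * (2 * η) :=
          mul_lt_mul_of_pos_left hb2η h1δpos
        have k3 : (1 + 1 / δ) * (2 * η) = 2 * η * (1 + 1 / δ) := by ring
        linarith
      have s2 : (∫ s in A k..A (k + 1), (|f (θ + s) - f x| + |f (θ - s) - f x|))
          ≤ ε' * ((1 + 1 / δ) * A (k + 1)) := by
        rw [intervalIntegral.integral_add (hg2int _ _) (hgint _ _)]
        have e1 : (∫ s in A k..A (k + 1), |f (θ + s) - f x|)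
            = ∫ u in (θ + A k)..(θ + A (k + 1)), |f u - f x| := by
          have := intervalIntegral.integral_comp_add_left (a := A k) (b := A (k + 1))
            (fun u => |f u - f x|) θ
          simpa using this
        have e2 : (∫ s in A k..A (k + 1), |f (θ - s) - f x|)
            = ∫ u in (θ - A (k + 1))..(θ - A k), |f u - f x| := by
          have := intervalIntegral.integral_comp_sub_left (a := A k) (b := A (k + 1))
            (fun u => |f u - f x|) θ
          simpa using this
        have hadj : (∫ u in (θ - A (k + 1))..(θ - A k), |f u - f x|)
            + (∫ u in (θ - A k)..(θ + A k), |f u - f x|)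
            + (∫ u in (θ + A k)..(θ + A (k + 1)), |f u - f x|)
            = ∫ u in (θ - A (k + 1))..(θ + A (k + 1)), |f u - f x| := by
          rw [intervalIntegral.integral_add_adjacent_intervals (hqint _ _) (hqint _ _),
            intervalIntegral.integral_add_adjacent_intervals (hqint _ _) (hqint _ _)]
        have hmidnn : 0 ≤ ∫ u in (θ - A k)..(θ + A k), |f u - f x| :=
          intervalIntegral.integral_nonneg (by linarith) fun u _ => abs_nonneg _
        have hLA : lam r ≤ (1 / δ) * A (k + 1) := by
          have k1 : δ * lam r ≤ A (k + 1) := by rw [← hadef]; exact haA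
          calc lam r = (1 / δ) * (δ * lam r) := by field_simp
            _ ≤ (1 / δ) * A (k + 1) := mul_le_mul_of_nonneg_left k1 (by positivity)
        have hθx := abs_le.mp hθ
        have hmono : (∫ u in (θ - A (k + 1))..(θ + A (k + 1)), |f u - f x|)
            ≤ ∫ u in (x - (1 + 1 / δ) * A (k + 1))..(x + (1 + 1 / δ) * A (k + 1)),
                |f u - f x| := by
          have hexp : (1 + 1 / δ) * A (k + 1) = A (k + 1) + (1 / δ) * A (k + 1) := by ring
          refine intervalIntegral.integral_mono_interval ?_ ?_ ?_
            (Filter.Eventually.of_forall fun u => abs_nonneg _) (hqint _ _)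
          · linarith [hθx.1]
          · linarith
          · linarith [hθx.2]
        have hGx : (∫ u in (x - (1 + 1 / δ) * A (k + 1))..(x + (1 + 1 / δ) * A (k + 1)),
              |f u - f x|) ≤ ε' * ((1 + 1 / δ) * A (k + 1)) := by
          have e3 : (∫ t in (-((1 + 1 / δ) * A (k + 1)))..((1 + 1 / δ) * A (k + 1)),
                |f (x + t) - f x|)
              = ∫ u in (x - (1 + 1 / δ) * A (k + 1))..(x + (1 + 1 / δ) * A (k + 1)),
                |f u - f x| := by
            have := intervalIntegral.integral_comp_add_left
              (a := -((1 + 1 / δ) * A (k + 1))) (b := (1 + 1 / δ) * A (k + 1))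
              (fun u => |f u - f x|) x
            simpa [sub_eq_add_neg] using this
          rw [← e3]
          exact hG _ hh'pos hh'lt
        linarith
      -- kernel mass lower bound on the previous dyadic block
      have s3 : φ r (A k) * (A k / 2)
          ≤ ∫ s in (2 ^ k * (a / 2))..(2 ^ (k + 1) * (a / 2)), φ r s := by
        have hBk1 : 2 ^ (k + 1) * (a / 2) = A k := by simp only [hAdef, pow_succ]; ring
        have hBk : 2 ^ k * (a / 2) = A k / 2 := by simp only [hAdef]; ring
        rw [hBk1, hBk]
        have hconst : (∫ s in (A k / 2)..(A k), (fun _ => φ r (A k)) s)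
            ≤ ∫ s in (A k / 2)..(A k), φ r s := by
          refine intervalIntegral.integral_mono_on (by linarith) intervalIntegrable_const
            (hψint _ _) ?_
          intro s hs
          exact hdec r hr01 ⟨by linarith [hs.1], le_trans hs.2 hAkπ⟩ ⟨hAk.le, hAkπ⟩ hs.2
        have hcval : (∫ s in (A k / 2)..(A k), (fun _ => φ r (A k)) s)
            = (A k - A k / 2) * φ r (A k) := by
          rw [intervalIntegral.integral_const, smul_eq_mul]
        have he : φ r (A k) * (A k / 2) = (A k - A k / 2) * φ r (A k) := by ring
        rw [he, ← hcval]
        exact hconst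
      calc (∫ s in A k..A (k + 1), (φ r s * |f (θ + s) - f x| + φ r s * |f (θ - s) - f x|))
          ≤ ∫ s in A k..A (k + 1), φ r (A k) * (|f (θ + s) - f x| + |f (θ - s) - f x|) := s1
        _ = φ r (A k) * ∫ s in A k..A (k + 1), (|f (θ + s) - f x| + |f (θ - s) - f x|) :=
            intervalIntegral.integral_const_mul _ _
        _ ≤ φ r (A k) * (ε' * ((1 + 1 / δ) * A (k + 1))) :=
            mul_le_mul_of_nonneg_left s2 (hψnn _)
        _ = 4 * (ε' * (1 + 1 / δ)) * (φ r (A k) * (A k / 2)) := by rw [hA1]; ring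
        _ ≤ 4 * (ε' * (1 + 1 / δ)) * ∫ s in (2 ^ k * (a / 2))..(2 ^ (k + 1) * (a / 2)), φ r s :=
            mul_le_mul_of_nonneg_left s3 (by positivity)
    -- sum over the dyadic blocks
    have hsum1 : ∑ k ∈ Finset.range N, (∫ s in A k..A (k + 1),
          (φ r s * |f (θ + s) - f x| + φ r s * |f (θ - s) - f x|))
        = ∫ s in a..b, (φ r s * |f (θ + s) - f x| + φ r s * |f (θ - s) - f x|) := by
      have := intervalIntegral.sum_integral_adjacent_intervals (a := A) (n := N)
        (μ := volume)
        (f := fun s => φ r s * |f (θ + s) - f x| + φ r s * |f (θ - s) - f x|)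
        (fun k _ => (hψg2int _ _).add (hψgint _ _))
      rw [hA0a, hANb] at this
      exact this
    have hsum2 : ∑ k ∈ Finset.range N, (∫ s in (2 ^ k * (a / 2))..(2 ^ (k + 1) * (a / 2)), φ r s)
        = ∫ s in (a / 2)..(2 ^ N * (a / 2)), φ r s := by
      have := intervalIntegral.sum_integral_adjacent_intervals
        (a := fun k => 2 ^ k * (a / 2)) (n := N) (μ := volume) (f := φ r)
        (fun k _ => hψint _ _)
      simpa using this
    have hItop : (∫ s in (a / 2)..(2 ^ N * (a / 2)), φ r s) ≤ 2 := by
      have h2N : 2 ^ N * (a / 2) = 2 ^ Np * a := by rw [hNp, pow_succ]; ring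
      have hle1 : (∫ s in (a / 2)..(2 ^ N * (a / 2)), φ r s) ≤ ∫ s in (-π)..π, φ r s := by
        refine intervalIntegral.integral_mono_interval (by linarith) ?_ ?_
          (Filter.Eventually.of_forall fun u => hψnn u) (hψint _ _)
        · rw [h2N]; linarith
        · rw [h2N]; linarith
      have h2' : (∫ s in (-π)..π, φ r s) < 2 := by
        have k1 := (abs_lt.mp hr3).2
        have k2 : ε'' ≤ 1 := min_le_left _ _
        linarith
      linarith
    have hfinal : (∫ s in a..b, (φ r s * |f (θ + s) - f x| + φ r s * |f (θ - s) - f x|))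
        ≤ 4 * (ε' * (1 + 1 / δ)) * 2 := by
      rw [← hsum1]
      calc ∑ k ∈ Finset.range N, (∫ s in A k..A (k + 1),
            (φ r s * |f (θ + s) - f x| + φ r s * |f (θ - s) - f x|))
          ≤ ∑ k ∈ Finset.range N, 4 * (ε' * (1 + 1 / δ))
              * ∫ s in (2 ^ k * (a / 2))..(2 ^ (k + 1) * (a / 2)), φ r s :=
            Finset.sum_le_sum fun k hk => key k (Finset.mem_range.mp hk)
        _ = 4 * (ε' * (1 + 1 / δ))
              * ∑ k ∈ Finset.range N, (∫ s in (2 ^ k * (a / 2))..(2 ^ (k + 1) * (a / 2)), φ r s) :=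
            (Finset.mul_sum _ _ _).symm
        _ = 4 * (ε' * (1 + 1 / δ)) * ∫ s in (a / 2)..(2 ^ N * (a / 2)), φ r s := by rw [hsum2]
        _ ≤ 4 * (ε' * (1 + 1 / δ)) * 2 := mul_le_mul_of_nonneg_left hItop (by positivity)
    have hsplit2 : (∫ s in a..b, (φ r s * |f (θ + s) - f x| + φ r s * |f (θ - s) - f x|))
        = (∫ s in a..b, φ r s * |f (θ + s) - f x|) + ∫ s in a..b, φ r s * |f (θ - s) - f x| :=
      intervalIntegral.integral_add (hψg2int _ _) (hψgint _ _)
    have hval : 4 * (ε' * (1 + 1 / δ)) * 2 = ε / 4 := by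
      rw [hε'def]
      field_simp
      ring
    rw [hmidL]
    rw [hval] at hfinal
    linarith
  -- decomposition of the error
  have hconstterm : |((∫ t in (-π)..π, φ r t) - 1) * f x| ≤ ε / 8 := by
    rw [abs_mul]
    have h1 : |(∫ t in (-π)..π, φ r t) - 1| ≤ ε / (8 * (|f x| + 1)) :=
      le_of_lt (lt_of_lt_of_le hr3 (min_le_right _ _))
    have h2 : |(∫ t in (-π)..π, φ r t) - 1| * |f x| ≤ (ε / (8 * (|f x| + 1))) * |f x| :=
      mul_le_mul_of_nonneg_right h1 (abs_nonneg _)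
    have h3 : (ε / (8 * (|f x| + 1))) * |f x| ≤ ε / 8 := by
      rw [div_mul_eq_mul_div, div_le_div_iff₀ (by positivity) (by norm_num)]
      have h4 : 0 ≤ |f x| := abs_nonneg _
      nlinarith [hε.le]
    linarith
  have hdecomp : (∫ s in (-π)..π, φ r s * f (θ - s)) - f x
      = (∫ s in (-π)..π, φ r s * (f (θ - s) - f x))
        + ((∫ t in (-π)..π, φ r t) - 1) * f x := by
    have h1 : (∫ s in (-π)..π, φ r s * (f (θ - s) - f x))
        = (∫ s in (-π)..π, φ r s * f (θ - s)) - (∫ t in (-π)..π, φ r t) * f x := by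
      simp only [mul_sub]
      rw [intervalIntegral.integral_sub (hψfint _ _) ((hψint _ _).mul_const (f x)),
        intervalIntegral.integral_mul_const]
    rw [h1]
    ring
  have habs : |(∫ s in (-π)..π, φ r s * (f (θ - s) - f x))|
      ≤ ∫ s in (-π)..π, φ r s * |f (θ - s) - f x| := by
    have h1 := intervalIntegral.abs_integral_le_integral_abs (μ := volume)
      (f := fun s => φ r s * (f (θ - s) - f x)) (a := -π) (b := π) (by linarith)
    have h2 : (∫ s in (-π)..π, |φ r s * (f (θ - s) - f x)|)
        = ∫ s in (-π)..π, φ r s * |f (θ - s) - f x| := by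
      apply intervalIntegral.integral_congr
      intro s _
      simp only []
      rw [abs_mul, abs_of_nonneg (hψnn s)]
    rw [h2] at h1
    exact h1
  have htailR' : (∫ s in b..π, φ r s * |f (θ - s) - f x|) ≤ ε / 16 :=
    le_trans htailR hε₂Cπ
  have htailL' : (∫ s in (-π)..(-b), φ r s * |f (θ - s) - f x|) ≤ ε / 16 :=
    le_trans htailL hε₂Cπ
  -- split the positive integral into five pieces
  have hsplit : (∫ s in (-π)..π, φ r s * |f (θ - s) - f x|)
      = (∫ s in (-π)..(-b), φ r s * |f (θ - s) - f x|)
        + (∫ s in (-b)..(-a), φ r s * |f (θ - s) - f x|)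
        + (∫ s in (-a)..a, φ r s * |f (θ - s) - f x|)
        + (∫ s in a..b, φ r s * |f (θ - s) - f x|)
        + (∫ s in b..π, φ r s * |f (θ - s) - f x|) := by
    have A1 := intervalIntegral.integral_add_adjacent_intervals
      (hψgint (-π) (-b)) (hψgint (-b) (-a))
    have A2 := intervalIntegral.integral_add_adjacent_intervals
      (hψgint (-π) (-a)) (hψgint (-a) a)
    have A3 := intervalIntegral.integral_add_adjacent_intervals
      (hψgint (-π) a) (hψgint a b)
    have A4 := intervalIntegral.integral_add_adjacent_intervals
      (hψgint (-π) b) (hψgint b π)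
    linarith
  -- put everything together
  rw [hcv, hdecomp]
  calc |(∫ s in (-π)..π, φ r s * (f (θ - s) - f x))
        + ((∫ t in (-π)..π, φ r t) - 1) * f x|
      ≤ |(∫ s in (-π)..π, φ r s * (f (θ - s) - f x))|
        + |((∫ t in (-π)..π, φ r t) - 1) * f x| := abs_add_le _ _
    _ ≤ (∫ s in (-π)..π, φ r s * |f (θ - s) - f x|)
        + |((∫ t in (-π)..π, φ r t) - 1) * f x| := by linarith
    _ < ε := by
        rw [hsplit]
        linarith [htailR', htailL', hinner, hmid, hconstterm]
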